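/- Let φ be an analytic self-map of the unit disk 𝔻 such that the iterates φ_n converge pointwise on 𝔻 to a constant p ∈ 𝔻. Then every recurrent vector f ∈ S_ν of the composition operator C_φ on S_ν satisfies f(z) = f(p) for all z ∈ 𝔻, i.e., f is constant. Consequently C_φ is not recurrent on S_ν. -/

import Mathlib

open Filter Topology

noncomputable def snormSq (ν : ℝ) (a : ℕ → ℂ) : ℝ :=
  ∑' n : ℕ, ‖a n‖ ^ 2 * ((n : ℝ) + 1) ^ (2 * ν)

def memS (ν : ℝ) (a : ℕ → ℂ) : Prop :=
  Summable fun n : ℕ => ‖a n‖ ^ 2 * ((n : ℝ) + 1) ^ (2 * ν)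

/-- Evaluation of the analytic function with Taylor coefficients `a` at `z`. -/
noncomputable def seval (a : ℕ → ℂ) (z : ℂ) : ℂ := ∑' n : ℕ, a n * z ^ n

lemma summable_rpow_mul_geometric (c : ℝ) {r : ℝ} (hr0 : 0 ≤ r) (hr1 : r < 1) :
    Summable (fun n : ℕ => ((n:ℝ)+1) ^ c * r ^ n) := by
  set k := ⌈max c 0⌉₊ with hk
  have hrn : ‖r‖ < 1 := by rwa [Real.norm_eq_abs, abs_of_nonneg hr0]
  have hsum : Summable (fun n : ℕ => (2:ℝ)^k * ((n:ℝ)^k * r^n) + r^n) :=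
    ((summable_pow_mul_geometric_of_norm_lt_one k hrn).mul_left _).add
      (summable_geometric_of_lt_one hr0 hr1)
  refine hsum.of_nonneg_of_le (fun n => by positivity) (fun n => ?_)
  have hb1 : (1:ℝ) ≤ (n:ℝ)+1 := by
    have : (0:ℝ) ≤ (n:ℝ) := Nat.cast_nonneg n
    linarith
  have h1 : ((n:ℝ)+1) ^ c ≤ ((n:ℝ)+1) ^ (k:ℝ) :=
    Real.rpow_le_rpow_of_exponent_le hb1 (le_trans (le_max_left _ _) (Nat.le_ceil _))
  have h2 : ((n:ℝ)+1) ^ (k:ℝ) = ((n:ℝ)+1) ^ k := Real.rpow_natCast _ _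
  have h3 : ((n:ℝ)+1) ^ k ≤ 2^k * (n:ℝ)^k + 1 := by
    rcases Nat.eq_zero_or_pos n with h | h
    · simp [h]
    · have hn1 : (1:ℝ) ≤ (n:ℝ) := by exact_mod_cast h
      have : ((n:ℝ)+1) ^ k ≤ (2*(n:ℝ)) ^ k := by
        apply pow_le_pow_left₀ (by positivity); linarith
      calc ((n:ℝ)+1) ^ k ≤ (2*(n:ℝ)) ^ k := this
        _ = 2^k * (n:ℝ)^k := by rw [mul_pow]
        _ ≤ 2^k * (n:ℝ)^k + 1 := by linarith
  have hrp : (0:ℝ) ≤ r ^ n := by positivity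
  calc ((n:ℝ)+1) ^ c * r ^ n ≤ (2^k * (n:ℝ)^k + 1) * r ^ n :=
        mul_le_mul_of_nonneg_right (h1.trans (h2.le.trans h3)) hrp
    _ = 2^k * ((n:ℝ)^k * r^n) + r^n := by ring

lemma coef_le {ν : ℝ} {a : ℕ → ℂ} (ha : memS ν a) (n : ℕ) :
    ‖a n‖ ≤ Real.sqrt (snormSq ν a) * ((n:ℝ)+1) ^ (-ν) := by
  have hb : (0:ℝ) < (n:ℝ)+1 := by positivity
  have h1 : ‖a n‖^2 * ((n:ℝ)+1)^(2*ν) ≤ snormSq ν a :=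
    Summable.le_tsum ha n (fun m _ => by positivity)
  have hw : (0:ℝ) < ((n:ℝ)+1)^(2*ν) := Real.rpow_pos_of_pos hb _
  have h2 : ‖a n‖^2 ≤ snormSq ν a * ((n:ℝ)+1)^(-(2*ν)) := by
    rw [Real.rpow_neg hb.le, ← div_eq_mul_inv, le_div_iff₀ hw]
    exact h1
  calc ‖a n‖ = Real.sqrt (‖a n‖^2) := by rw [Real.sqrt_sq (norm_nonneg _)]
    _ ≤ Real.sqrt (snormSq ν a * ((n:ℝ)+1)^(-(2*ν))) := Real.sqrt_le_sqrt h2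
    _ = Real.sqrt (snormSq ν a) * Real.sqrt (((n:ℝ)+1)^(-(2*ν))) :=
        Real.sqrt_mul (tsum_nonneg (fun m => by positivity)) _
    _ = Real.sqrt (snormSq ν a) * ((n:ℝ)+1) ^ (-ν) := by
        congr 1
        rw [Real.sqrt_eq_rpow, ← Real.rpow_mul hb.le]
        congr 1; ring

lemma summable_norm_eval {ν : ℝ} {a : ℕ → ℂ} (ha : memS ν a) {r : ℝ}
    (hr0 : 0 ≤ r) (hr1 : r < 1) : Summable (fun n : ℕ => ‖a n‖ * r ^ n) := by
  refine (((summable_rpow_mul_geometric (-ν) hr0 hr1).mul_left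
    (Real.sqrt (snormSq ν a)))).of_nonneg_of_le (fun n => by positivity) (fun n => ?_)
  calc ‖a n‖ * r ^ n ≤ (Real.sqrt (snormSq ν a) * ((n:ℝ)+1) ^ (-ν)) * r ^ n :=
        mul_le_mul_of_nonneg_right (coef_le ha n) (by positivity)
    _ = Real.sqrt (snormSq ν a) * (((n:ℝ)+1) ^ (-ν) * r ^ n) := by ring

lemma summable_eval {ν : ℝ} {a : ℕ → ℂ} (ha : memS ν a) {z : ℂ} (hz : ‖z‖ < 1) :
    Summable (fun n : ℕ => a n * z ^ n) := by
  refine Summable.of_norm ?_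
  have := summable_norm_eval ha (norm_nonneg z) hz
  simpa [norm_mul, norm_pow] using this

lemma seval_sub {ν : ℝ} {a b : ℕ → ℂ} (ha : memS ν a) (hb : memS ν b) {z : ℂ}
    (hz : ‖z‖ < 1) : seval (fun m => a m - b m) z = seval a z - seval b z := by
  unfold seval
  rw [← Summable.tsum_sub (summable_eval ha hz) (summable_eval hb hz)]
  congr 1; funext m; ring

lemma seval_norm_le {ν : ℝ} {a : ℕ → ℂ} (ha : memS ν a) {z : ℂ} (hz : ‖z‖ < 1) :
    ‖seval a z‖ ≤ Real.sqrt (snormSq ν a) * ∑' n : ℕ, ((n:ℝ)+1) ^ (-ν) * ‖z‖ ^ n := by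
  have hs1 : Summable (fun n : ℕ => ‖a n * z ^ n‖) := by
    have := summable_norm_eval ha (norm_nonneg z) hz
    simpa [norm_mul, norm_pow] using this
  have hs2 : Summable (fun n : ℕ => Real.sqrt (snormSq ν a) *
      (((n:ℝ)+1) ^ (-ν) * ‖z‖ ^ n)) :=
    (summable_rpow_mul_geometric (-ν) (norm_nonneg z) hz).mul_left _
  calc ‖seval a z‖ ≤ ∑' n : ℕ, ‖a n * z ^ n‖ := norm_tsum_le_tsum_norm hs1
    _ ≤ ∑' n : ℕ, Real.sqrt (snormSq ν a) * (((n:ℝ)+1) ^ (-ν) * ‖z‖ ^ n) := by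
        refine Summable.tsum_le_tsum (fun n => ?_) hs1 hs2
        rw [norm_mul, norm_pow]
        calc ‖a n‖ * ‖z‖ ^ n ≤ (Real.sqrt (snormSq ν a) * ((n:ℝ)+1) ^ (-ν)) * ‖z‖ ^ n :=
              mul_le_mul_of_nonneg_right (coef_le ha n) (by positivity)
          _ = Real.sqrt (snormSq ν a) * (((n:ℝ)+1) ^ (-ν) * ‖z‖ ^ n) := by ring
    _ = Real.sqrt (snormSq ν a) * ∑' n : ℕ, ((n:ℝ)+1) ^ (-ν) * ‖z‖ ^ n := tsum_mul_left

lemma memS_sub {ν : ℝ} {a b : ℕ → ℂ} (ha : memS ν a) (hb : memS ν b) :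
    memS ν (fun m => a m - b m) := by
  refine ((ha.mul_left 2).add (hb.mul_left 2)).of_nonneg_of_le
    (fun n => by positivity) (fun n => ?_)
  have h1 : ‖a n - b n‖ ≤ ‖a n‖ + ‖b n‖ := norm_sub_le _ _
  have h2 : ‖a n - b n‖^2 ≤ 2*‖a n‖^2 + 2*‖b n‖^2 := by
    nlinarith [h1, sq_nonneg (‖a n‖ - ‖b n‖), norm_nonneg (a n - b n), norm_nonneg (a n),
      norm_nonneg (b n), mul_self_le_mul_self (norm_nonneg (a n - b n)) h1]
  have hw : (0:ℝ) ≤ ((n:ℝ)+1)^(2*ν) := by positivity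
  calc ‖a n - b n‖^2 * ((n:ℝ)+1)^(2*ν) ≤ (2*‖a n‖^2 + 2*‖b n‖^2) * ((n:ℝ)+1)^(2*ν) :=
        mul_le_mul_of_nonneg_right h2 hw
    _ = 2*(‖a n‖^2 * ((n:ℝ)+1)^(2*ν)) + 2*(‖b n‖^2 * ((n:ℝ)+1)^(2*ν)) := by ring

set_option maxHeartbeats 1000000 in
theorem stmt10 (ν : ℝ) (φ : ℂ → ℂ)
    (hφmaps : ∀ z ∈ Metric.ball (0 : ℂ) 1, φ z ∈ Metric.ball (0 : ℂ) 1)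
    (hφa : AnalyticOnNhd ℂ φ (Metric.ball (0 : ℂ) 1))
    (p : ℂ) (hp : p ∈ Metric.ball (0 : ℂ) 1)
    (hconv : ∀ z ∈ Metric.ball (0 : ℂ) 1, Tendsto (fun n => φ^[n] z) atTop (𝓝 p))
    (Cop : (ℕ → ℂ) → (ℕ → ℂ))
    (hCmem : ∀ a, memS ν a → memS ν (Cop a))
    (hcomp : ∀ a, memS ν a → ∀ z ∈ Metric.ball (0 : ℂ) 1,
      seval (Cop a) z = seval a (φ z)) :
    (∀ f, memS ν f →
      (∃ n : ℕ → ℕ, StrictMono n ∧ (∀ k, 0 < n k) ∧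
        Tendsto (fun k => snormSq ν (fun m => Cop^[n k] f m - f m)) atTop (𝓝 0)) →
      ∀ z ∈ Metric.ball (0 : ℂ) 1, seval f z = seval f p)
    ∧ ¬ (∀ g, memS ν g → ∀ ε > 0, ∃ f, memS ν f ∧
        (∃ n : ℕ → ℕ, StrictMono n ∧ (∀ k, 0 < n k) ∧
          Tendsto (fun k => snormSq ν (fun m => Cop^[n k] f m - f m)) atTop (𝓝 0)) ∧
        snormSq ν (fun m => g m - f m) < ε) := by
  have hpn : ‖p‖ < 1 := by rwa [Metric.mem_ball, dist_zero_right] at hp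
  have hpart1 : ∀ f, memS ν f →
      (∃ n : ℕ → ℕ, StrictMono n ∧ (∀ k, 0 < n k) ∧
        Tendsto (fun k => snormSq ν (fun m => Cop^[n k] f m - f m)) atTop (𝓝 0)) →
      ∀ z ∈ Metric.ball (0 : ℂ) 1, seval f z = seval f p := by
    rintro f hf ⟨n, hmono, hpos, hlim⟩ z hz
    have hzn : ‖z‖ < 1 := by rwa [Metric.mem_ball, dist_zero_right] at hz
    have hiter : ∀ m, memS ν (Cop^[m] f) ∧
        ∀ w ∈ Metric.ball (0:ℂ) 1, seval (Cop^[m] f) w = seval f (φ^[m] w) := by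
      intro m
      induction m with
      | zero => exact ⟨hf, fun w hw => by simp⟩
      | succ m ih =>
        constructor
        · rw [Function.iterate_succ_apply']
          exact hCmem _ ih.1
        · intro w hw
          rw [Function.iterate_succ_apply' Cop, hcomp _ ih.1 w hw,
            ih.2 (φ w) (hφmaps w hw), Function.iterate_succ_apply φ]
    set K := ∑' k : ℕ, ((k:ℝ)+1) ^ (-ν) * ‖z‖ ^ k with hK
    have hA : Tendsto (fun k => seval (Cop^[n k] f) z) atTop (𝓝 (seval f z)) := by
      rw [tendsto_iff_norm_sub_tendsto_zero]
      have hb : ∀ k, ‖seval (Cop^[n k] f) z - seval f z‖ ≤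
          Real.sqrt (snormSq ν (fun m => Cop^[n k] f m - f m)) * K := by
        intro k
        have hm : memS ν (fun m => Cop^[n k] f m - f m) := memS_sub (hiter (n k)).1 hf
        have h := seval_norm_le hm hzn
        rwa [seval_sub (hiter (n k)).1 hf hzn] at h
      have h0 : Tendsto (fun k => Real.sqrt (snormSq ν (fun m => Cop^[n k] f m - f m)))
          atTop (𝓝 0) := by
        have := (Real.continuous_sqrt.tendsto 0).comp hlim
        simpa [Function.comp_def] using this
      have hlim2 : Tendsto (fun k =>
          Real.sqrt (snormSq ν (fun m => Cop^[n k] f m - f m)) * K) atTop (𝓝 0) := by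
        simpa using h0.mul_const K
      exact squeeze_zero (fun k => norm_nonneg _) hb hlim2
    have hB : Tendsto (fun k => seval (Cop^[n k] f) z) atTop (𝓝 (seval f p)) := by
      set r := (1 + ‖p‖)/2 with hr
      have hr0 : (0:ℝ) ≤ r := by positivity
      have hr1 : r < 1 := by rw [hr]; linarith
      have hpr : ‖p‖ < r := by rw [hr]; linarith
      have husum : Summable (fun m : ℕ => ‖f m‖ * r ^ m) := summable_norm_eval hf hr0 hr1
      have hcont : ContinuousOn (fun x : ℂ => ∑' m : ℕ, f m * x ^ m)
          (Metric.closedBall 0 r) := by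
        refine continuousOn_tsum
          (fun m => (continuous_const.mul (continuous_pow m)).continuousOn)
          husum (fun m x hx => ?_)
        rw [Metric.mem_closedBall, dist_zero_right] at hx
        rw [norm_mul, norm_pow]
        exact mul_le_mul_of_nonneg_left (pow_le_pow_left₀ (norm_nonneg x) hx m)
          (norm_nonneg _)
      have hw : Tendsto (fun k => φ^[n k] z) atTop (𝓝 p) :=
        (hconv z hz).comp hmono.tendsto_atTop
      have hev : ∀ᶠ k in atTop, φ^[n k] z ∈ Metric.closedBall (0:ℂ) r := by
        have hev0 : ∀ᶠ k in atTop, ‖φ^[n k] z‖ < r := hw.norm.eventually_lt_const hpr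
        filter_upwards [hev0] with k hk
        rw [Metric.mem_closedBall, dist_zero_right]
        exact hk.le
      have hwithin : Tendsto (fun k => φ^[n k] z) atTop
          (𝓝[Metric.closedBall (0:ℂ) r] p) :=
        tendsto_nhdsWithin_of_tendsto_nhds_of_eventually_within _ hw hev
      have hp' : p ∈ Metric.closedBall (0:ℂ) r := by
        rw [Metric.mem_closedBall, dist_zero_right]; exact hpr.le
      have hB0 : Tendsto (fun k => seval f (φ^[n k] z)) atTop (𝓝 (seval f p)) := by
        have hB0' : Tendsto ((fun x : ℂ => ∑' m : ℕ, f m * x ^ m) ∘ (fun k => φ^[n k] z))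
            atTop (𝓝 ((fun x : ℂ => ∑' m : ℕ, f m * x ^ m) p)) :=
          Tendsto.comp (hcont p hp') hwithin
        simpa [seval, Function.comp_def] using hB0'
      exact hB0.congr (fun k => ((hiter (n k)).2 z hz).symm)
    exact tendsto_nhds_unique hA hB
  refine ⟨hpart1, ?_⟩
  intro H
  set g : ℕ → ℂ := fun m => if m = 1 then 1 else 0 with hgdef
  have hgmem : memS ν g := by
    apply summable_of_ne_finset_zero (s := ({1} : Finset ℕ))
    intro m hm
    simp only [Finset.mem_singleton] at hm
    simp [hgdef, hm]
  have hε : (0:ℝ) < (2:ℝ)^(2*ν) := Real.rpow_pos_of_pos two_pos _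
  obtain ⟨f, hfmem, hrec, hclose⟩ := H g hgmem ((2:ℝ)^(2*ν)) hε
  have hconst := hpart1 f hfmem hrec
  have hzero : (0:ℂ) ∈ Metric.ball (0:ℂ) 1 := Metric.mem_ball_self one_pos
  have hf0 : seval f 0 = f 0 := by
    unfold seval
    rw [tsum_eq_single 0]
    · simp
    · intro m hm; simp [zero_pow hm]
  have hsevalp : seval f p = f 0 := by rw [← hconst 0 hzero, hf0]
  have hf1 : f 1 = 0 := by
    set M := ∑' m : ℕ, ‖f (m+2)‖ * (1/2:ℝ)^m with hM
    have hMsum : Summable (fun m : ℕ => ‖f (m+2)‖ * (1/2:ℝ)^m) := by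
      have h0 : Summable (fun m : ℕ => ‖f m‖ * (1/2:ℝ)^m) :=
        summable_norm_eval hfmem (by norm_num) (by norm_num)
      have h1 : Summable (fun m : ℕ => ‖f (m+2)‖ * (1/2:ℝ)^(m+2)) := by
        have := (summable_nat_add_iff (f := fun m : ℕ => ‖f m‖ * (1/2:ℝ)^m) 2).2 h0
        exact this
      refine (h1.mul_left 4).congr (fun m => ?_)
      ring
    have hMnonneg : (0:ℝ) ≤ M := tsum_nonneg (fun m => by positivity)
    have key : ∀ t : ℝ, 0 < t → t ≤ 1/2 → ‖f 1‖ ≤ t * M := by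
      intro t ht0 ht2
      set z : ℂ := (t : ℂ) with hzdef
      have hzn : ‖z‖ = t := by
        rw [hzdef, Complex.norm_real, Real.norm_eq_abs, abs_of_pos ht0]
      have hzlt : ‖z‖ < 1 := by rw [hzn]; linarith
      have hzne : z ≠ 0 := by
        rw [hzdef]
        exact_mod_cast ne_of_gt ht0
      have hs0 : Summable (fun m : ℕ => f m * z ^ m) := summable_eval hfmem hzlt
      have hs1' : Summable (fun m : ℕ => f (m+1) * z ^ (m+1)) := by
        have := (summable_nat_add_iff (f := fun m : ℕ => f m * z ^ m) 1).2 hs0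
        exact this
      have hs1 : Summable (fun m : ℕ => f (m+1) * z ^ m) := by
        refine (hs1'.mul_right z⁻¹).congr (fun m => ?_)
        rw [pow_succ]
        field_simp
      have hs2 : Summable (fun m : ℕ => f (m+2) * z ^ m) := by
        have hs2' : Summable (fun m : ℕ => f (m+1+1) * z ^ (m+1)) := by
          have := (summable_nat_add_iff (f := fun m : ℕ => f (m+1) * z ^ m) 1).2 hs1
          exact this
        refine (hs2'.mul_right z⁻¹).congr (fun m => ?_)
        show f (m+2) * z ^ (m+1) * z⁻¹ = f (m+2) * z ^ m
        rw [pow_succ]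
        field_simp
      have he : seval f z = f 0 := by
        rw [hconst z (by rw [Metric.mem_ball, dist_zero_right]; exact hzlt), hsevalp]
      have e1 : (∑' m : ℕ, f (m+1) * z ^ (m+1)) = 0 := by
        have h2 : f 0 * z ^ 0 + (∑' m : ℕ, f (m+1) * z ^ (m+1)) = f 0 := by
          rw [← Summable.tsum_eq_zero_add hs0]
          exact he
        simpa using h2
      have e2 : (∑' m : ℕ, f (m+1) * z ^ m) = 0 := by
        have hmul : z * (∑' m : ℕ, f (m+1) * z ^ m) = 0 := by
          rw [← tsum_mul_left, ← e1]
          exact tsum_congr (fun m => by rw [pow_succ]; ring)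
        rcases mul_eq_zero.1 hmul with h | h
        · exact absurd h hzne
        · exact h
      have e3 : f 1 = -(z * ∑' m : ℕ, f (m+2) * z ^ m) := by
        have h5 := Summable.tsum_eq_zero_add hs1
        rw [e2] at h5
        have h4 : (∑' m : ℕ, f (m+1+1) * z ^ (m+1)) = z * ∑' m : ℕ, f (m+2) * z ^ m := by
          rw [← tsum_mul_left]
          exact tsum_congr (fun m => by
            show f (m+2) * z ^ (m+1) = z * (f (m+2) * z ^ m)
            rw [pow_succ]; ring)
        rw [h4] at h5
        simp only [pow_zero, mul_one] at h5
        linear_combination -h5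
      have hTsum : Summable (fun m : ℕ => ‖f (m+2) * z ^ m‖) := by
        refine hMsum.of_nonneg_of_le (fun m => norm_nonneg _) (fun m => ?_)
        rw [norm_mul, norm_pow, hzn]
        exact mul_le_mul_of_nonneg_left (pow_le_pow_left₀ ht0.le ht2 m) (norm_nonneg _)
      have hT : ‖∑' m : ℕ, f (m+2) * z ^ m‖ ≤ M := by
        calc ‖∑' m : ℕ, f (m+2) * z ^ m‖ ≤ ∑' m : ℕ, ‖f (m+2) * z ^ m‖ :=
              norm_tsum_le_tsum_norm hTsum
          _ ≤ M := by
              refine Summable.tsum_le_tsum (fun m => ?_) hTsum hMsum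
              rw [norm_mul, norm_pow, hzn]
              exact mul_le_mul_of_nonneg_left (pow_le_pow_left₀ ht0.le ht2 m)
                (norm_nonneg _)
      calc ‖f 1‖ = ‖z * ∑' m : ℕ, f (m+2) * z ^ m‖ := by rw [e3, norm_neg]
        _ = ‖z‖ * ‖∑' m : ℕ, f (m+2) * z ^ m‖ := norm_mul _ _
        _ ≤ t * M := by
            rw [hzn]
            exact mul_le_mul_of_nonneg_left hT ht0.le
    have hnorm0 : ‖f 1‖ ≤ 0 := by
      refine le_of_forall_pos_le_add (fun ε hε' => ?_)
      have ht0 : 0 < min (1/2 : ℝ) (ε / (M+1)) := lt_min (by norm_num) (by positivity)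
      have h5 := key _ ht0 (min_le_left _ _)
      have h6 : min (1/2 : ℝ) (ε / (M+1)) * M ≤ ε := by
        have h7 : min (1/2 : ℝ) (ε / (M+1)) ≤ ε/(M+1) := min_le_right _ _
        have h8 : min (1/2 : ℝ) (ε / (M+1)) * M ≤ (ε/(M+1)) * M :=
          mul_le_mul_of_nonneg_right h7 hMnonneg
        have h9 : (ε/(M+1)) * M ≤ ε := by
          rw [div_mul_eq_mul_div, div_le_iff₀ (by linarith)]
          nlinarith
        linarith
      linarith
    exact norm_le_zero_iff.1 hnorm0
  have hsubmem : memS ν (fun m => g m - f m) := memS_sub hgmem hfmem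
  have hterm : ‖g 1 - f 1‖^2 * (((1:ℕ):ℝ)+1)^(2*ν) ≤ snormSq ν (fun m => g m - f m) :=
    Summable.le_tsum hsubmem 1 (fun m _ => by positivity)
  have h9 : ‖g 1 - f 1‖^2 * (((1:ℕ):ℝ)+1)^(2*ν) = (2:ℝ)^(2*ν) := by
    rw [hf1]
    norm_num [hgdef]
  rw [h9] at hterm
  linarith
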